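/- For l = 1,…,L let {x_i^{A,l}} be an orthonormal basis of ℂ^{d_A} and {x_j^{B,l}} an orthonormal basis of ℂ^{d_B}. Suppose ω is a vector with nonnegative entries summing to L such that for every density matrix σ_A on ℂ^{d_A}, the direct sum ⊕_{l=1}^L p(x^{A,l}|σ_A) of the measurement distributions is majorized by ω. Then for every separable density matrix ρ on ℂ^{d_A} ⊗ ℂ^{d_B}, the direct sum ⊕_{l=1}^L p^{(l)} of the joint measurement distributions p^{(l)} of ρ in the bases {x_i^{A,l} ⊗ x_j^{B,l}} is majorized by ω. -/

import Mathlib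

open Matrix
open scoped Kronecker ComplexOrder

noncomputable section

/-- Sum of the `k` largest entries of `v` (zero-padding implicit for nonneg vectors):
the maximum of `∑ i ∈ s, v i` over subsets `s` of cardinality at most `k`. -/
def topSum {ι : Type*} [Fintype ι] (v : ι → ℝ) (k : ℕ) : ℝ :=
  (Finset.univ.powerset.filter fun s => s.card ≤ k).sup' ⟨∅, by simp⟩ fun s => ∑ i ∈ s, v i

/-- `v ≺ w` (majorization, with implicit zero padding): every partial sum of the `k` largest
entries of `v` is at most that of `w`, and the total sums are equal. -/
def Majorizes {ι κ : Type*} [Fintype ι] [Fintype κ] (v : ι → ℝ) (w : κ → ℝ) : Prop :=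
  (∀ k : ℕ, topSum v k ≤ topSum w k) ∧ (∑ i, v i = ∑ j, w j)

/-- The operator norm (largest singular value) of a complex matrix. -/
def opNorm {m n : Type*} [Fintype m] [Fintype n] [DecidableEq n] (M : Matrix m n ℂ) : ℝ :=
  ‖LinearMap.toContinuousLinearMap (Matrix.toEuclideanLin M)‖

/-- `sCoef U k = s_k`: the maximum operator norm over all submatrices of `U` of class `k`,
i.e. obtained by selecting nonempty row/column sets `R`, `C` with `|R| + |C| = k + 1`. -/
def sCoef {d : ℕ} (U : Matrix (Fin d) (Fin d) ℂ) (k : ℕ) : ℝ :=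
  sSup { r : ℝ | ∃ R C : Finset (Fin d), R.Nonempty ∧ C.Nonempty ∧ R.card + C.card = k + 1 ∧
    r = opNorm (U.submatrix (fun i : {i // i ∈ R} => (i : Fin d))
                            (fun j : {j // j ∈ C} => (j : Fin d))) }

/-- The bound vector `ω^{X⊕Z} = (1, s_1, s_2 - s_1, …, s_d - s_{d-1}, 0, …, 0) ∈ ℝ^{2d}`.
(Note `sCoef U 0 = sSup ∅ = 0`, so the entry at index `1` is `s_1`.) -/
def omegaDS {d : ℕ} (U : Matrix (Fin d) (Fin d) ℂ) : Fin (2 * d) → ℝ := fun i =>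
  if (i : ℕ) = 0 then 1
  else if (i : ℕ) ≤ d then sCoef U (i : ℕ) - sCoef U ((i : ℕ) - 1)
  else 0

/-- A density matrix: positive semidefinite with unit trace. -/
def IsDensityMatrix {n : Type*} [Fintype n] (ρ : Matrix n n ℂ) : Prop :=
  ρ.PosSemidef ∧ ρ.trace = 1

/-- A family of vectors forming an orthonormal basis of `ℂ^d` (w.r.t. `⟨u, v⟩ = star u ⬝ᵥ v`). -/
def OrthonormalBasisVecs {d : ℕ} (x : Fin d → Fin d → ℂ) : Prop :=
  ∀ i j, star (x i) ⬝ᵥ x j = if i = j then 1 else 0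

/-- Measurement distribution of a density matrix `ρ` in the basis `x`: `p i = ⟨x i, ρ (x i)⟩`. -/
def measDist {d : ℕ} (x : Fin d → Fin d → ℂ) (ρ : Matrix (Fin d) (Fin d) ℂ) : Fin d → ℝ :=
  fun i => (star (x i) ⬝ᵥ (ρ *ᵥ x i)).re

/-- The tensor product of vectors. -/
def tensorVec {dA dB : ℕ} (u : Fin dA → ℂ) (v : Fin dB → ℂ) : Fin dA × Fin dB → ℂ :=
  fun ab => u ab.1 * v ab.2

/-- Joint measurement distribution of a bipartite density matrix `ρ` in the product basis
`{xA i ⊗ xB j}`: `p (i,j) = ⟨xA i ⊗ xB j, ρ (xA i ⊗ xB j)⟩`. -/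
def jointDist {dA dB : ℕ} (xA : Fin dA → Fin dA → ℂ) (xB : Fin dB → Fin dB → ℂ)
    (ρ : Matrix (Fin dA × Fin dB) (Fin dA × Fin dB) ℂ) : Fin dA × Fin dB → ℝ :=
  fun ij => (star (tensorVec (xA ij.1) (xB ij.2)) ⬝ᵥ (ρ *ᵥ tensorVec (xA ij.1) (xB ij.2))).re

open scoped Classical in
/-- The finite set of distinct values of the products `α i * β j`. -/
def valueSet {dA dB : ℕ} (α : Fin dA → ℝ) (β : Fin dB → ℝ) : Finset ℝ :=
  Finset.image (fun ij : Fin dA × Fin dB => α ij.1 * β ij.2) Finset.univ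

open scoped Classical in
/-- The grouped distribution of a joint distribution `p`, indexed by the distinct values `l`
of the products `α i * β j`, with entries `∑_{(i,j) : α i * β j = l} p (i,j)`. -/
def groupedDist {dA dB : ℕ} (α : Fin dA → ℝ) (β : Fin dB → ℝ)
    (p : Fin dA × Fin dB → ℝ) : valueSet α β → ℝ :=
  fun l => ∑ ij ∈ Finset.univ.filter (fun ij : Fin dA × Fin dB => α ij.1 * β ij.2 = (l : ℝ)), p ij

/-- Separability: `ρ` is a finite convex combination of tensor products of density matrices. -/
def IsSeparableState {dA dB : ℕ} (ρ : Matrix (Fin dA × Fin dB) (Fin dA × Fin dB) ℂ) : Prop :=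
  ∃ (K : ℕ) (lam : Fin K → ℝ) (σ : Fin K → Matrix (Fin dA) (Fin dA) ℂ)
    (τ : Fin K → Matrix (Fin dB) (Fin dB) ℂ),
    (∀ k, 0 ≤ lam k) ∧ (∑ k, lam k = 1) ∧
    (∀ k, IsDensityMatrix (σ k)) ∧ (∀ k, IsDensityMatrix (τ k)) ∧
    ρ = ∑ k, (lam k : ℂ) • (σ k ⊗ₖ τ k)


lemma kron_mulVec {dA dB : ℕ} (σ : Matrix (Fin dA) (Fin dA) ℂ) (τ : Matrix (Fin dB) (Fin dB) ℂ)
    (u : Fin dA → ℂ) (v : Fin dB → ℂ) :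
    (σ ⊗ₖ τ) *ᵥ tensorVec u v = tensorVec (σ *ᵥ u) (τ *ᵥ v) := by
  funext ij
  obtain ⟨i, j⟩ := ij
  simp only [mulVec, dotProduct, kroneckerMap_apply, tensorVec, Fintype.sum_prod_type]
  rw [Finset.sum_mul_sum]
  refine Finset.sum_congr rfl fun i' _ => Finset.sum_congr rfl fun j' _ => by ring

lemma tensor_dot {dA dB : ℕ} (u p : Fin dA → ℂ) (v q : Fin dB → ℂ) :
    star (tensorVec u v) ⬝ᵥ tensorVec p q = (star u ⬝ᵥ p) * (star v ⬝ᵥ q) := by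
  simp only [dotProduct, tensorVec, Pi.star_apply, star_mul', Fintype.sum_prod_type]
  rw [Finset.sum_mul_sum]
  refine Finset.sum_congr rfl fun i _ => Finset.sum_congr rfl fun j _ => by ring

lemma kron_quadform {dA dB : ℕ} (σ : Matrix (Fin dA) (Fin dA) ℂ) (τ : Matrix (Fin dB) (Fin dB) ℂ)
    (u : Fin dA → ℂ) (v : Fin dB → ℂ) :
    star (tensorVec u v) ⬝ᵥ ((σ ⊗ₖ τ) *ᵥ tensorVec u v)
      = (star u ⬝ᵥ (σ *ᵥ u)) * (star v ⬝ᵥ (τ *ᵥ v)) := by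
  rw [kron_mulVec, tensor_dot]

lemma sum_mulVec' {n m K : Type*} [Fintype n] [Fintype m] [Fintype K]
    (f : K → Matrix m n ℂ) (v : n → ℂ) :
    (∑ k, f k) *ᵥ v = ∑ k, f k *ᵥ v := by
  funext i
  simp only [Matrix.mulVec, dotProduct, Finset.sum_apply, Matrix.sum_apply, Finset.sum_mul]
  rw [Finset.sum_comm]

lemma dotProduct_sum' {n K : Type*} [Fintype n] [Fintype K] (v : n → ℂ) (f : K → n → ℂ) :
    v ⬝ᵥ (∑ k, f k) = ∑ k, v ⬝ᵥ f k := by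
  simp only [dotProduct, Finset.sum_apply, Finset.mul_sum]
  rw [Finset.sum_comm]

lemma sum_le_topSum {ι : Type*} [Fintype ι] (v : ι → ℝ) {k : ℕ} {s : Finset ι}
    (h : s.card ≤ k) : ∑ i ∈ s, v i ≤ topSum v k := by
  have hmem : s ∈ Finset.univ.powerset.filter (fun t => t.card ≤ k) := by simp [h]
  exact Finset.le_sup' (fun t => ∑ i ∈ t, v i) hmem

lemma topSum_le {ι : Type*} [Fintype ι] (v : ι → ℝ) (k : ℕ) {c : ℝ}
    (h : ∀ s : Finset ι, s.card ≤ k → ∑ i ∈ s, v i ≤ c) : topSum v k ≤ c := by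
  apply Finset.sup'_le
  intro s hs
  simp only [Finset.mem_filter] at hs
  exact h s hs.2

lemma quad_nonneg {d : ℕ} {σ : Matrix (Fin d) (Fin d) ℂ} (hσ : σ.PosSemidef)
    (u : Fin d → ℂ) : 0 ≤ (star u ⬝ᵥ (σ *ᵥ u)).re ∧ (star u ⬝ᵥ (σ *ᵥ u)).im = 0 := by
  have := hσ.dotProduct_mulVec_nonneg u
  rw [Complex.le_def] at this
  simpa using ⟨this.1, this.2.symm⟩

lemma measDist_sum_eq_one {d : ℕ} (x : Fin d → Fin d → ℂ) (hx : OrthonormalBasisVecs x)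
    (τ : Matrix (Fin d) (Fin d) ℂ) (hτ : IsDensityMatrix τ) :
    ∑ j, measDist x τ j = 1 := by
  set U : Matrix (Fin d) (Fin d) ℂ := Matrix.of fun i j => x j i with hU
  have hUU : Uᴴ * U = 1 := by
    ext i j
    have := hx i j
    simp only [dotProduct, Pi.star_apply] at this
    simpa [Matrix.mul_apply, Matrix.conjTranspose_apply, hU, Matrix.one_apply] using this
  have hUU' : U * Uᴴ = 1 := mul_eq_one_comm.mp hUU
  have htr : ∑ j, star (x j) ⬝ᵥ (τ *ᵥ x j) = Matrix.trace (Uᴴ * τ * U) := by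
    rw [Matrix.trace]
    refine Finset.sum_congr rfl fun j _ => ?_
    simp only [Matrix.diag_apply, Matrix.mul_apply, Matrix.conjTranspose_apply, hU,
        Matrix.of_apply, dotProduct, mulVec, Pi.star_apply, Finset.sum_mul, Finset.mul_sum]
    rw [Finset.sum_comm]
    exact Finset.sum_congr rfl fun i _ => Finset.sum_congr rfl fun k _ => by ring
  have htr2 : Matrix.trace (Uᴴ * τ * U) = 1 := by
    rw [Matrix.trace_mul_cycle, hUU', Matrix.one_mul, hτ.2]
  have : (∑ j, star (x j) ⬝ᵥ (τ *ᵥ x j)).re = 1 := by rw [htr, htr2]; simp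
  rw [← this, Complex.re_sum]
  rfl

lemma grouped_bound {dA dB L : ℕ} (a : Fin L × Fin dA → ℝ) (b : Fin L → Fin dB → ℝ)
    (ha : ∀ li, 0 ≤ a li) (hb : ∀ l j, 0 ≤ b l j) (hb1 : ∀ l, ∑ j, b l j ≤ 1)
    (s : Finset (Fin L × (Fin dA × Fin dB))) (k : ℕ) (hs : s.card ≤ k) :
    ∑ x ∈ s, a (x.1, x.2.1) * b x.1 x.2.2 ≤ topSum a k := by
  classical
  set t := s.image (fun x : Fin L × (Fin dA × Fin dB) => (x.1, x.2.1)) with ht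
  have hmap : ∀ x ∈ s, (x.1, x.2.1) ∈ t := fun x hx => Finset.mem_image_of_mem _ hx
  rw [← Finset.sum_fiberwise_of_maps_to hmap (fun x => a (x.1, x.2.1) * b x.1 x.2.2)]
  have step : ∀ y ∈ t, ∑ x ∈ s.filter (fun x => (x.1, x.2.1) = y),
      a (x.1, x.2.1) * b x.1 x.2.2 ≤ a y := by
    intro y _
    have heq : ∑ x ∈ s.filter (fun x => (x.1, x.2.1) = y), a (x.1, x.2.1) * b x.1 x.2.2
        = a y * ∑ x ∈ s.filter (fun x => (x.1, x.2.1) = y), b y.1 x.2.2 := by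
      rw [Finset.mul_sum]
      refine Finset.sum_congr rfl fun x hx => ?_
      have hxy := (Finset.mem_filter.mp hx).2
      rw [hxy]
      have : x.1 = y.1 := (Prod.ext_iff.mp hxy).1
      rw [← this]
    rw [heq]
    have hfib : ∑ x ∈ s.filter (fun x => (x.1, x.2.1) = y), b y.1 x.2.2 ≤ 1 := by
      have hinj : ∀ x ∈ s.filter (fun x => (x.1, x.2.1) = y),
          ∀ x' ∈ s.filter (fun x => (x.1, x.2.1) = y), x.2.2 = x'.2.2 → x = x' := by
        intro x hx x' hx' hj
        have h1 := (Finset.mem_filter.mp hx).2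
        have h2 := (Finset.mem_filter.mp hx').2
        have : (x.1, x.2.1) = (x'.1, x'.2.1) := h1.trans h2.symm
        have hx1 : x.1 = x'.1 := (Prod.ext_iff.mp this).1
        have hx2 : x.2.1 = x'.2.1 := (Prod.ext_iff.mp this).2
        exact Prod.ext_iff.mpr ⟨hx1, Prod.ext_iff.mpr ⟨hx2, hj⟩⟩
      rw [← Finset.sum_image hinj]
      calc ∑ j ∈ (s.filter (fun x => (x.1, x.2.1) = y)).image (fun x => x.2.2), b y.1 j
          ≤ ∑ j, b y.1 j := Finset.sum_le_sum_of_subset_of_nonneg (Finset.subset_univ _)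
            (fun j _ _ => hb y.1 j)
        _ ≤ 1 := hb1 y.1
    calc a y * ∑ x ∈ s.filter (fun x => (x.1, x.2.1) = y), b y.1 x.2.2
        ≤ a y * 1 := mul_le_mul_of_nonneg_left hfib (ha y)
      _ = a y := mul_one _
  calc ∑ y ∈ t, ∑ x ∈ s.filter (fun x => (x.1, x.2.1) = y), a (x.1, x.2.1) * b x.1 x.2.2
      ≤ ∑ y ∈ t, a y := Finset.sum_le_sum step
    _ ≤ topSum a k := sum_le_topSum a (le_trans (Finset.card_image_le) hs)

/-- many observables: if `ω` is a nonnegative vector, summing to `L`, that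
majorizes the direct sum `⊕_l p(x^{A,l}|σ_A)` for every density matrix `σ_A` on system `A`,
then for every separable bipartite density matrix `ρ`, `ω` also majorizes the direct sum of the
joint measurement distributions of `ρ` in the product bases `{x_i^{A,l} ⊗ x_j^{B,l}}`. -/
theorem separable_many_observables_detection {dA dB L M : ℕ}
    (xA : Fin L → Fin dA → Fin dA → ℂ) (xB : Fin L → Fin dB → Fin dB → ℂ)
    (hxA : ∀ l, OrthonormalBasisVecs (xA l)) (hxB : ∀ l, OrthonormalBasisVecs (xB l))
    (ω : Fin M → ℝ) (hω0 : ∀ i, 0 ≤ ω i) (hωs : ∑ i, ω i = L)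
    (hbound : ∀ σ : Matrix (Fin dA) (Fin dA) ℂ, IsDensityMatrix σ →
      Majorizes (fun li : Fin L × Fin dA => measDist (xA li.1) σ li.2) ω)
    (ρ : Matrix (Fin dA × Fin dB) (Fin dA × Fin dB) ℂ)
    (hρ : IsDensityMatrix ρ) (hsep : IsSeparableState ρ) :
    Majorizes (fun li : Fin L × (Fin dA × Fin dB) => jointDist (xA li.1) (xB li.1) ρ li.2)
      ω := by
  obtain ⟨K, lam, σ, τ, hlam0, hlam1, hσ, hτ, hρeq⟩ := hsep
  have hdecomp : ∀ li : Fin L × (Fin dA × Fin dB),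
      jointDist (xA li.1) (xB li.1) ρ li.2
        = ∑ k, lam k * (measDist (xA li.1) (σ k) li.2.1 * measDist (xB li.1) (τ k) li.2.2) := by
    intro li
    obtain ⟨l, i, j⟩ := li
    show (star (tensorVec (xA l i) (xB l j)) ⬝ᵥ (ρ *ᵥ tensorVec (xA l i) (xB l j))).re = _
    rw [hρeq, sum_mulVec', dotProduct_sum', Complex.re_sum]
    refine Finset.sum_congr rfl fun k _ => ?_
    rw [Matrix.smul_mulVec, dotProduct_smul, kron_quadform]
    have hA := quad_nonneg (hσ k).1 (xA l i)
    have hB := quad_nonneg (hτ k).1 (xB l j)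
    rw [smul_eq_mul, Complex.re_ofReal_mul, Complex.mul_re, hB.2, mul_zero, sub_zero]
    rfl
  have hbsum : ∀ (k : Fin K) (l : Fin L), ∑ j, measDist (xB l) (τ k) j = 1 :=
    fun k l => measDist_sum_eq_one _ (hxB l) _ (hτ k)
  have hann : ∀ (k : Fin K) (li : Fin L × Fin dA), 0 ≤ measDist (xA li.1) (σ k) li.2 :=
    fun k li => (quad_nonneg (hσ k).1 (xA li.1 li.2)).1
  have hbnn : ∀ (k : Fin K) (l : Fin L) (j : Fin dB), 0 ≤ measDist (xB l) (τ k) j :=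
    fun k l j => (quad_nonneg (hτ k).1 (xB l j)).1
  constructor
  · intro k0
    apply topSum_le
    intro s hs
    rw [Finset.sum_congr rfl fun x _ => hdecomp x, Finset.sum_comm]
    have step : ∀ k : Fin K, ∑ x ∈ s,
        lam k * (measDist (xA x.1) (σ k) x.2.1 * measDist (xB x.1) (τ k) x.2.2)
          ≤ lam k * topSum ω k0 := by
      intro k
      rw [← Finset.mul_sum]
      refine mul_le_mul_of_nonneg_left ?_ (hlam0 k)
      have h1 := grouped_bound (fun li : Fin L × Fin dA => measDist (xA li.1) (σ k) li.2)
        (fun l j => measDist (xB l) (τ k) j) (hann k) (hbnn k)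
        (fun l => le_of_eq (hbsum k l)) s k0 hs
      exact h1.trans ((hbound (σ k) (hσ k)).1 k0)
    calc ∑ k, ∑ x ∈ s,
          lam k * (measDist (xA x.1) (σ k) x.2.1 * measDist (xB x.1) (τ k) x.2.2)
        ≤ ∑ k, lam k * topSum ω k0 := Finset.sum_le_sum fun k _ => step k
      _ = topSum ω k0 := by rw [← Finset.sum_mul, hlam1, one_mul]
  · rw [Finset.sum_congr rfl fun x _ => hdecomp x, Finset.sum_comm]
    have step : ∀ k : Fin K, ∑ x : Fin L × (Fin dA × Fin dB),
        lam k * (measDist (xA x.1) (σ k) x.2.1 * measDist (xB x.1) (τ k) x.2.2)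
          = lam k * ∑ j, ω j := by
      intro k
      rw [← Finset.mul_sum]
      congr 1
      calc ∑ x : Fin L × (Fin dA × Fin dB),
            measDist (xA x.1) (σ k) x.2.1 * measDist (xB x.1) (τ k) x.2.2
          = ∑ l, ∑ ij : Fin dA × Fin dB,
              measDist (xA l) (σ k) ij.1 * measDist (xB l) (τ k) ij.2 := by
            rw [Fintype.sum_prod_type]
        _ = ∑ l, (∑ i, measDist (xA l) (σ k) i) * (∑ j, measDist (xB l) (τ k) j) := by
            refine Finset.sum_congr rfl fun l _ => ?_
            rw [Finset.sum_mul_sum, Fintype.sum_prod_type]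
        _ = ∑ l, ∑ i, measDist (xA l) (σ k) i := by
            refine Finset.sum_congr rfl fun l _ => ?_
            rw [hbsum k l, mul_one]
        _ = ∑ li : Fin L × Fin dA, measDist (xA li.1) (σ k) li.2 := by
            rw [Fintype.sum_prod_type]
        _ = ∑ j, ω j := (hbound (σ k) (hσ k)).2
    rw [Finset.sum_congr rfl fun k _ => step k, ← Finset.sum_mul, hlam1, one_mul]


end
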